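/- If s < ⌈log_r(min{m,n})⌉ (equivalently r^s < min{m,n}), then no m×n matrix of rank min{m,n} can be written as the Hadamard product of s matrices each of rank at most r. Consequently the generic r-th Hadamard rank of m×n matrices is at least ⌈log_r(min{m,n})⌉. -/

import Mathlib

open Matrix

lemma factor_of_rank (A : Matrix (Fin m) (Fin n) ℂ) :
    ∃ (U : Matrix (Fin m) (Fin A.rank) ℂ) (V : Matrix (Fin A.rank) (Fin n) ℂ),
      A = U * V := by
  set W := Submodule.span ℂ (Set.range Aᵀ) with hW
  have hd : Module.finrank ℂ W = A.rank := (Matrix.rank_eq_finrank_span_cols A).symm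
  let b : Module.Basis (Fin A.rank) ℂ W := (Module.finBasis ℂ W).reindex (finCongr hd)
  have colmem : ∀ j, Aᵀ j ∈ W := fun j => Submodule.subset_span ⟨j, rfl⟩
  refine ⟨fun i a => (b a : Fin m → ℂ) i,
    fun a j => b.repr ⟨Aᵀ j, colmem j⟩ a, ?_⟩
  ext i j
  have h := b.sum_repr ⟨Aᵀ j, colmem j⟩
  have h2 := congrFun (congrArg Subtype.val h) i
  simp only [AddSubmonoidClass.coe_finset_sum, Finset.sum_apply, SetLike.val_smul,
    Pi.smul_apply, smul_eq_mul] at h2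
  show A i j = ∑ a : Fin A.rank, (b a : Fin m → ℂ) i * b.repr ⟨Aᵀ j, colmem j⟩ a
  rw [show A i j = Aᵀ j i from rfl, ← h2]
  exact Finset.sum_congr rfl fun a _ => mul_comm _ _

lemma rank_hadamard_le (A B : Matrix (Fin m) (Fin n) ℂ) :
    (A.hadamard B).rank ≤ A.rank * B.rank := by
  obtain ⟨U, V, hA⟩ := factor_of_rank A
  obtain ⟨U', V', hB⟩ := factor_of_rank B
  let U2 : Matrix (Fin m) (Fin A.rank × Fin B.rank) ℂ := fun i p => U i p.1 * U' i p.2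
  let V2 : Matrix (Fin A.rank × Fin B.rank) (Fin n) ℂ := fun p j => V p.1 j * V' p.2 j
  have hfac : A.hadamard B = U2 * V2 := by
    ext i j
    simp only [Matrix.hadamard_apply, hA, hB, Matrix.mul_apply, Fintype.sum_prod_type,
      Finset.sum_mul_sum, U2, V2]
    show _ = ∑ p : Fin A.rank × Fin B.rank, (U i p.1 * U' i p.2) * (V p.1 j * V' p.2 j)
    rw [Fintype.sum_prod_type]
    apply Finset.sum_congr rfl; intro a _
    apply Finset.sum_congr rfl; intro b _
    ring
  calc (A.hadamard B).rank = (U2 * V2).rank := by rw [hfac]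
    _ ≤ U2.rank := Matrix.rank_mul_le_left U2 V2
    _ ≤ Fintype.card (Fin A.rank × Fin B.rank) := Matrix.rank_le_card_width U2
    _ = A.rank * B.rank := by simp

lemma rank_foldr_le {r : ℕ} (L : List (Matrix (Fin m) (Fin n) ℂ))
    (hL : ∀ A ∈ L, A.rank ≤ r) :
    (L.foldr Matrix.hadamard (Matrix.of fun _ _ => (1 : ℂ))).rank ≤ r ^ L.length := by
  induction L with
  | nil =>
      simp only [List.foldr_nil, List.length_nil, pow_zero]
      have : (Matrix.of fun _ _ => (1 : ℂ) : Matrix (Fin m) (Fin n) ℂ) =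
          (Matrix.of fun (i : Fin m) (a : Fin 1) => (1 : ℂ)) * (Matrix.of fun (a : Fin 1) (j : Fin n) => (1 : ℂ)) := by
        ext i j; simp [Matrix.mul_apply]
      calc _ ≤ _ := by
            rw [this]
            exact le_trans (Matrix.rank_mul_le_left _ _)
              (le_trans (Matrix.rank_le_card_width _) (by simp))
  | cons A L ih =>
      simp only [List.foldr_cons, List.length_cons, pow_succ]
      calc (A.hadamard _).rank ≤ A.rank * _ := rank_hadamard_le _ _
        _ ≤ r ^ L.length * r := by
            rw [mul_comm (r ^ L.length) r]
            exact Nat.mul_le_mul (hL A (by simp)) (ih fun B hB => hL B (by simp [hB]))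
        _ = r ^ L.length * r := rfl

/-- If `r ^ s < min m n`, then no `m × n` matrix of full rank `min m n` is the
Hadamard product of `s` matrices of rank at most `r`; consequently any Hadamard
decomposition of a full-rank matrix into rank-`≤ r` factors has length at least
`⌈log_r (min m n)⌉`. The Hadamard product of a list is taken with the all-ones matrix
(the Hadamard identity) as base case. -/
theorem hadamard_log_lower_bound {m n r s : ℕ} (hr : 2 ≤ r) (hs : r ^ s < min m n) :
    (∀ M : Matrix (Fin m) (Fin n) ℂ, M.rank = min m n →
      ∀ L : List (Matrix (Fin m) (Fin n) ℂ), L.length = s →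
        (∀ A ∈ L, A.rank ≤ r) →
        L.foldr Matrix.hadamard (Matrix.of fun _ _ => (1 : ℂ)) ≠ M) ∧
    (∀ M : Matrix (Fin m) (Fin n) ℂ, M.rank = min m n →
      ∀ L : List (Matrix (Fin m) (Fin n) ℂ), (∀ A ∈ L, A.rank ≤ r) →
        L.foldr Matrix.hadamard (Matrix.of fun _ _ => (1 : ℂ)) = M →
        Nat.clog r (min m n) ≤ L.length) := by
  constructor
  · intro M hM L hlen hranks heq
    have h1 : M.rank ≤ r ^ s := by
      rw [← heq, ← hlen]; exact rank_foldr_le L hranks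
    rw [hM] at h1
    exact absurd (lt_of_le_of_lt h1 hs) (lt_irrefl _)
  · intro M hM L hranks heq
    have h1 : M.rank ≤ r ^ L.length := by
      rw [← heq]; exact rank_foldr_le L hranks
    rw [hM] at h1
    exact (Nat.clog_le_iff_le_pow (by omega)).mpr h1
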